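/- Let Ω¹ be a ℤ²-graded B-bimodule with grading-compatible involution †, λ ∈ ℂ with |λ|=1, and define σ_θ on homogeneous two-tensors by σ_θ(ω ⊗ η) := Θ(ω,η) η ⊗ ω where Θ(ω,η) = λ^{n₂(ω)n₁(η) − n₂(η)n₁(ω)}. Then σ_θ is an involution (σ_θ² = id), a B_θ-bimodule map for the deformed actions, and satisfies †∘σ_θ = σ_θ^{−1}∘† where (ω⊗η)† := η†⊗ω† with ω† = λ^{n₁(ω)n₂(ω)}ω*. -/

import Mathlib

/-- For a ℤ²-graded (central) *-bimodule `Ω¹` over a graded *-algebra `B`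
and `|λ| = 1`, the map `σ_θ(ω⊗η) := Θ(ω,η) η⊗ω` on the θ-deformed two-tensors is an
involution, a `B_θ`-bimodule map for the deformed actions, and satisfies
`† ∘ σ_θ = σ_θ⁻¹ ∘ †` (equivalently, since `σ_θ² = 1`, it commutes with the deformed
dagger `(ω⊗η)† = η†⊗ω†`, `ω† = λ^{n₁(ω)n₂(ω)}ω*`). Here `t ω η` denotes `ω ⊗_θ η`. -/
theorem stmt_11 {B Ω T : Type*} [Ring B] [Algebra ℂ B]
    [AddCommGroup Ω] [Module ℂ Ω] [AddCommGroup T] [Module ℂ T]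
    (l : ℂ) (hl : ‖l‖ = 1)
    (ℬ : ℤ × ℤ → Submodule ℂ B) (Gr : ℤ × ℤ → Submodule ℂ Ω)
    (starΩ : Ω → Ω)
    (hstarGr : ∀ n : ℤ × ℤ, ∀ ω ∈ Gr n, starΩ ω ∈ Gr (-n))
    (actl : B → Ω → Ω) (actr : Ω → B → Ω)
    (hcentral : ∀ (b : B) (ω : Ω), actr ω b = actl b ω)
    (hactGr : ∀ (m n : ℤ × ℤ) (b : B) (ω : Ω), b ∈ ℬ m → ω ∈ Gr n → actl b ω ∈ Gr (m + n))
    (t : Ω → Ω → T)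
    (ht_sl : ∀ (c : ℂ) (ω η : Ω), t (c • ω) η = c • t ω η)
    (ht_sr : ∀ (c : ℂ) (ω η : Ω), t ω (c • η) = c • t ω η)
    (ht_balθ : ∀ (nω nb nη : ℤ × ℤ) (ω : Ω) (b : B) (η : Ω),
      ω ∈ Gr nω → b ∈ ℬ nb → η ∈ Gr nη →
      t (l ^ (nω.2 * nb.1) • actr ω b) η = t ω (l ^ (nb.2 * nη.1) • actl b η))
    (σθ : T → T)
    (hσθ_s : ∀ (c : ℂ) (v : T), σθ (c • v) = c • σθ v)
    (hσθ_t : ∀ (m n : ℤ × ℤ) (ω η : Ω), ω ∈ Gr m → η ∈ Gr n →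
      σθ (t ω η) = l ^ (m.2 * n.1 - n.2 * m.1) • t η ω)
    (dagT : T → T)
    (hdagT_s : ∀ (c : ℂ) (v : T), dagT (c • v) = (starRingEnd ℂ) c • dagT v)
    (hdagT_t : ∀ (m n : ℤ × ℤ) (ω η : Ω), ω ∈ Gr m → η ∈ Gr n →
      dagT (t ω η) = l ^ (n.1 * n.2) • l ^ (m.1 * m.2) • t (starΩ η) (starΩ ω)) :
    -- σ_θ is an involution:
    (∀ (m n : ℤ × ℤ) (ω η : Ω), ω ∈ Gr m → η ∈ Gr n → σθ (σθ (t ω η)) = t ω η) ∧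
    -- σ_θ is a left B_θ-module map:
    (∀ (na m n : ℤ × ℤ) (a : B) (ω η : Ω), a ∈ ℬ na → ω ∈ Gr m → η ∈ Gr n →
      σθ (l ^ (na.2 * m.1) • t (actl a ω) η)
        = l ^ (m.2 * n.1 - n.2 * m.1) • (l ^ (na.2 * n.1) • t (actl a η) ω)) ∧
    -- σ_θ is a right B_θ-module map:
    (∀ (na m n : ℤ × ℤ) (a : B) (ω η : Ω), a ∈ ℬ na → ω ∈ Gr m → η ∈ Gr n →
      σθ (t ω (l ^ (n.2 * na.1) • actr η a))
        = l ^ (m.2 * n.1 - n.2 * m.1) • t η (l ^ (m.2 * na.1) • actr ω a)) ∧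
    -- † ∘ σ_θ = σ_θ⁻¹ ∘ † (with σ_θ⁻¹ = σ_θ):
    (∀ (m n : ℤ × ℤ) (ω η : Ω), ω ∈ Gr m → η ∈ Gr n →
      dagT (σθ (t ω η)) = σθ (dagT (t ω η))) := by
  have hl0 : l ≠ 0 := by
    intro h; rw [h] at hl; simp at hl
  have hsm : ∀ (a b : ℤ) (v : T), l ^ a • l ^ b • v = l ^ (a + b) • v := by
    intro a b v; rw [smul_smul, ← zpow_add₀ hl0]
  -- balance relation: l^(n₂(η)·n₁(a)) • (aη ⊗ ω) = l^(n₂(a)·n₁(ω)) • (η ⊗ aω)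
  have hbal : ∀ (na m n : ℤ × ℤ) (a : B) (ω η : Ω), a ∈ ℬ na → ω ∈ Gr m → η ∈ Gr n →
      l ^ (n.2 * na.1) • t (actl a η) ω = l ^ (na.2 * m.1) • t η (actl a ω) := by
    intro na m n a ω η ha hω hη
    have h := ht_balθ n na m η a ω hη ha hω
    rw [hcentral, ht_sl, ht_sr] at h
    exact h
  have hconj : (starRingEnd ℂ) l = l⁻¹ := by
    refine eq_inv_of_mul_eq_one_right ?_
    rw [Complex.mul_conj, Complex.normSq_eq_norm_sq, hl]
    norm_num
  have hconjpow : ∀ a : ℤ, (starRingEnd ℂ) (l ^ a) = l ^ (-a) := by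
    intro a; rw [map_zpow₀, hconj, inv_zpow, ← zpow_neg]
  refine ⟨?_, ?_, ?_, ?_⟩
  · -- involution
    intro m n ω η hω hη
    rw [hσθ_t m n ω η hω hη, hσθ_s, hσθ_t n m η ω hη hω, hsm,
      show (m.2 * n.1 - n.2 * m.1) + (n.2 * m.1 - m.2 * n.1) = (0 : ℤ) by ring,
      zpow_zero, one_smul]
  · -- left module map
    intro na m n a ω η ha hω hη
    have hb := hbal na m n a ω η ha hω hη
    have hY : t (actl a η) ω = l ^ (na.2 * m.1 - n.2 * na.1) • t η (actl a ω) := by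
      have h1 : t (actl a η) ω = l ^ (-(n.2 * na.1)) • l ^ (n.2 * na.1) • t (actl a η) ω := by
        rw [hsm, neg_add_cancel, zpow_zero, one_smul]
      rw [h1, hb, hsm]
      congr 2
      ring
    rw [hσθ_s, hσθ_t (na + m) n _ _ (hactGr na m a ω ha hω) hη]
    simp only [hY, hsm]
    congr 2
    simp only [Prod.fst_add, Prod.snd_add]
    ring
  · -- right module map
    intro na m n a ω η ha hω hη
    have hb := hbal na m n a ω η ha hω hη
    have hY : t (actl a η) ω = l ^ (na.2 * m.1 - n.2 * na.1) • t η (actl a ω) := by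
      have h1 : t (actl a η) ω = l ^ (-(n.2 * na.1)) • l ^ (n.2 * na.1) • t (actl a η) ω := by
        rw [hsm, neg_add_cancel, zpow_zero, one_smul]
      rw [h1, hb, hsm]
      congr 2
      ring
    rw [hcentral, hcentral, ht_sr, ht_sr, hσθ_s,
      hσθ_t m (na + n) _ _ hω (hactGr na n a η ha hη)]
    simp only [hY, hsm]
    congr 2
    simp only [Prod.fst_add, Prod.snd_add]
    ring
  · -- commutes with dagger
    intro m n ω η hω hη
    rw [hσθ_t m n ω η hω hη, hdagT_s, hconjpow, hdagT_t n m η ω hη hω,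
      hdagT_t m n ω η hω hη, hσθ_s, hσθ_s,
      hσθ_t (-n) (-m) _ _ (hstarGr n η hη) (hstarGr m ω hω), hsm, hsm, hsm, hsm]
    congr 1
    congr 1
    simp only [Prod.fst_neg, Prod.snd_neg]
    ring
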